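/- Let C = {θ ∈ ℝⁿ : Aθ ≤ b} be a nonempty convex polyhedron with A ∈ ℝ^{m×n} having rows a₁,…,a_m, and let θ̂(y) = P_C(y) be the metric projection of y onto C. Then for Lebesgue-almost every y ∈ ℝⁿ, the map θ̂ is differentiable at y and its divergence satisfies D(y) = n − rank(A_{J_y}), where J_y = {1 ≤ i ≤ m : ⟨a_i, θ̂(y)⟩ = b_i} is the set of binding constraints at θ̂(y) and A_{J_y} is the submatrix of A with rows indexed by J_y. -/

import Mathlib

open Matrix MeasureTheory Module Submodule

lemma dot_eq_inner' {n : ℕ} (v w : Fin n → ℝ) :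
    v ⬝ᵥ w = (inner ℝ ((WithLp.linearEquiv 2 ℝ (Fin n → ℝ)).symm v)
      ((WithLp.linearEquiv 2 ℝ (Fin n → ℝ)).symm w) : ℝ) := by
  simp [PiLp.inner_apply, RCLike.inner_apply, dotProduct, WithLp.linearEquiv_symm_apply, mul_comm]

lemma exists_proj {m n : ℕ} (A : Matrix (Fin m) (Fin n) ℝ) (b : Fin m → ℝ) (J : Finset (Fin m))
    (hJ : ∃ θ₀ : Fin n → ℝ, ∀ i ∈ J, A i ⬝ᵥ θ₀ = b i) :
    ∃ (c : Fin n → ℝ) (Q : (Fin n → ℝ) →L[ℝ] (Fin n → ℝ)),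
      (∀ i ∈ J, ∀ y, A i ⬝ᵥ (c + Q y) = b i) ∧
      (∀ y w, (∀ i ∈ J, A i ⬝ᵥ w = 0) → (y - (c + Q y)) ⬝ᵥ w = 0) ∧
      (∑ i, Q (Pi.single i 1) i = (n : ℝ) -
        (finrank ℝ (span ℝ {x : Fin n → ℝ | ∃ i ∈ J, A i = x}) : ℝ)) := by
  obtain ⟨θ₀, hθ₀⟩ := hJ
  set E := EuclideanSpace ℝ (Fin n)
  set eqv : (Fin n → ℝ) ≃ₗ[ℝ] E := (WithLp.linearEquiv 2 ℝ (Fin n → ℝ)).symm with heqv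
  set S : Set (Fin n → ℝ) := {x : Fin n → ℝ | ∃ i ∈ J, A i = x} with hS
  set L : Submodule ℝ E := span ℝ (eqv '' S) with hL
  set QE : E →ₗ[ℝ] E := Lᗮ.subtype ∘ₗ (orthogonalProjection Lᗮ).toLinearMap with hQE
  set QL : (Fin n → ℝ) →ₗ[ℝ] (Fin n → ℝ) := eqv.symm.conj QE with hQL
  set Q : (Fin n → ℝ) →L[ℝ] (Fin n → ℝ) := QL.toContinuousLinearMap with hQ
  have hQapp : ∀ v, Q v = eqv.symm (QE (eqv v)) := by
    intro v
    simp [hQ, hQL, LinearEquiv.conj_apply]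
  have hdot : ∀ v w : Fin n → ℝ, v ⬝ᵥ w = (inner ℝ (eqv v) (eqv w) : ℝ) := fun v w =>
    dot_eq_inner' v w
  have hmemL : ∀ i ∈ J, eqv (A i) ∈ L := by
    intro i hi
    exact subset_span ⟨A i, ⟨i, hi, rfl⟩, rfl⟩
  have hQE_mem : ∀ z : E, QE z ∈ Lᗮ := fun z => (orthogonalProjection Lᗮ z).2
  have h1 : ∀ i ∈ J, ∀ v, A i ⬝ᵥ (Q v) = 0 := by
    intro i hi v
    rw [hQapp, hdot, eqv.apply_symm_apply]
    exact (Submodule.mem_orthogonal L _).mp (hQE_mem (eqv v)) _ (hmemL i hi)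
  set c : Fin n → ℝ := θ₀ - Q θ₀ with hc
  have hkey : ∀ y : Fin n → ℝ, y - (c + Q y) = (y - θ₀) - Q (y - θ₀) := by
    intro y
    rw [hc, map_sub]
    abel
  refine ⟨c, Q, ?_, ?_, ?_⟩
  · intro i hi y
    rw [dotProduct_add, hc, dotProduct_sub, h1 i hi, h1 i hi, hθ₀ i hi]
    ring
  · intro y w hw
    have hwmem : eqv w ∈ Lᗮ := by
      rw [Submodule.mem_orthogonal]
      intro u hu
      induction hu using Submodule.span_induction with
      | mem x hx =>
          obtain ⟨x', ⟨i, hi, rfl⟩, rfl⟩ := hx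
          rw [← hdot]
          exact hw i hi
      | zero => exact inner_zero_left _
      | add x y hx hy ihx ihy => rw [inner_add_left, ihx, ihy]; ring
      | smul a x hx ihx => rw [inner_smul_left, ihx]; simp
    rw [hkey, hdot]
    have hmem2 : eqv ((y - θ₀) - Q (y - θ₀)) ∈ Lᗮᗮ := by
      rw [map_sub, hQapp, eqv.apply_symm_apply]
      exact Submodule.sub_starProjection_mem_orthogonal (K := Lᗮ) (eqv (y - θ₀))
    rw [real_inner_comm]
    exact (Submodule.mem_orthogonal _ _).mp hmem2 _ hwmem
  · have ha : ∑ i, Q (Pi.single i 1) i = LinearMap.trace ℝ _ QL := by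
      rw [LinearMap.trace_eq_matrix_trace ℝ (Pi.basisFun ℝ (Fin n)) QL, Matrix.trace]
      simp [Matrix.diag, LinearMap.toMatrix_apply, Pi.basisFun_apply, Pi.basisFun_repr, hQ]
    have hproj : LinearMap.IsProj Lᗮ QE := by
      constructor
      · exact hQE_mem
      · intro x hx
        show Lᗮ.starProjection x = x
        rw [Submodule.starProjection_eq_self_iff]
        exact hx
    have hb : LinearMap.trace ℝ _ QE = (finrank ℝ Lᗮ : ℝ) := hproj.trace
    have hc2 : finrank ℝ L + finrank ℝ Lᗮ = n := by
      rw [Submodule.finrank_add_finrank_orthogonal]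
      simp [E]
    have hd : finrank ℝ L = finrank ℝ (span ℝ S) := by
      rw [hL]
      have := LinearEquiv.finrank_map_eq eqv (span ℝ S)
      rw [Submodule.map_span] at this
      exact this
    rw [ha, hQL, LinearMap.trace_conj', hb]
    rw [hd] at hc2
    have := congrArg (fun k : ℕ => (k : ℝ)) hc2
    push_cast at this ⊢
    linarith


lemma proj_unique' {n : ℕ} {C : Set (Fin n → ℝ)} {p q y : Fin n → ℝ}
    (hp : p ∈ C) (hq : q ∈ C)
    (h1 : ∀ θ ∈ C, (y - p) ⬝ᵥ (θ - p) ≤ 0) (h2 : ∀ θ ∈ C, (y - q) ⬝ᵥ (θ - q) ≤ 0) :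
    p = q := by
  have ha := h1 q hq
  have hb := h2 p hp
  have hd : (p - q) ⬝ᵥ (p - q) ≤ 0 := by
    have e1 : (p - q) ⬝ᵥ (p - q) = (y - q) ⬝ᵥ (p - q) - (y - p) ⬝ᵥ (p - q) := by
      rw [← sub_dotProduct]; congr 1; abel
    have e2 : (y - p) ⬝ᵥ (p - q) = -((y - p) ⬝ᵥ (q - p)) := by
      rw [← dotProduct_neg]; congr 1; abel
    rw [e1, e2]
    linarith
  have hsum : ∑ j, (p - q) j * (p - q) j ≤ 0 := hd
  have hzero : ∑ j, (p - q) j * (p - q) j = 0 :=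
    le_antisymm hsum (Finset.sum_nonneg fun j _ => mul_self_nonneg _)
  have hz : ∀ j, p j = q j := by
    intro j
    have := (Finset.sum_eq_zero_iff_of_nonneg
      (fun j _ => mul_self_nonneg ((p - q) j))).mp hzero j (Finset.mem_univ j)
    have := mul_self_eq_zero.mp this
    have : p j - q j = 0 := this
    linarith
  exact funext fun j => hz j

lemma vi' {m n : ℕ} (A : Matrix (Fin m) (Fin n) ℝ) (b : Fin m → ℝ)
    (C : Set (Fin n → ℝ)) (hC : C = {θ | ∀ i, A i ⬝ᵥ θ ≤ b i})
    (θhat : (Fin n → ℝ) → (Fin n → ℝ))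
    (hproj : ∀ y, θhat y ∈ C ∧ ∀ θ ∈ C, ∑ j, (y j - θhat y j) ^ 2 ≤ ∑ j, (y j - θ j) ^ 2) :
    ∀ y θ, θ ∈ C → (y - θhat y) ⬝ᵥ (θ - θhat y) ≤ 0 := by
  intro y θ hθ
  by_contra hcon
  push_neg at hcon
  set p := θhat y with hp
  set d : Fin n → ℝ := θ - p with hdd
  set v : Fin n → ℝ := y - p with hvv
  set D := d ⬝ᵥ d with hD
  have hDnn : 0 ≤ D := Finset.sum_nonneg fun j _ => mul_self_nonneg _
  set t := min 1 ((v ⬝ᵥ d) / (D + 1)) with ht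
  have ht0 : 0 < t := lt_min one_pos (div_pos hcon (by linarith))
  have ht1 : t ≤ 1 := min_le_left _ _
  have htD : t * (D + 1) ≤ v ⬝ᵥ d := by
    have := min_le_right 1 ((v ⬝ᵥ d) / (D + 1))
    calc t * (D + 1) ≤ ((v ⬝ᵥ d) / (D + 1)) * (D + 1) := by
          apply mul_le_mul_of_nonneg_right this (by linarith)
      _ = v ⬝ᵥ d := by field_simp
  set θt : Fin n → ℝ := fun j => p j + t * d j with hθt
  have hmem : θt ∈ C := by
    rw [hC]
    intro i
    have hpc : A i ⬝ᵥ p ≤ b i := by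
      have h := (hproj y).1; rw [hC] at h; exact h i
    have hθc : A i ⬝ᵥ θ ≤ b i := by rw [hC] at hθ; exact hθ i
    have hlin : A i ⬝ᵥ θt = (1 - t) * (A i ⬝ᵥ p) + t * (A i ⬝ᵥ θ) := by
      simp only [dotProduct, hθt, hdd, Pi.sub_apply]
      rw [Finset.mul_sum, Finset.mul_sum, ← Finset.sum_add_distrib]
      exact Finset.sum_congr rfl fun j _ => by ring
    have : A i ⬝ᵥ θt ≤ b i := by rw [hlin]; nlinarith
    exact this
  have hmin := (hproj y).2 θt hmem
  have hexp : ∑ j, (y j - θt j) ^ 2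
      = (∑ j, (y j - p j) ^ 2) - 2 * t * (v ⬝ᵥ d) + t ^ 2 * D := by
    simp only [dotProduct, hθt, hvv, hdd, Pi.sub_apply, hD]
    rw [Finset.mul_sum, Finset.mul_sum, ← Finset.sum_sub_distrib, ← Finset.sum_add_distrib]
    exact Finset.sum_congr rfl fun j _ => by ring
  rw [hexp] at hmin
  nlinarith [htD, ht0, hDnn, hcon]

lemma tangent' {m n : ℕ} (A : Matrix (Fin m) (Fin n) ℝ) (b : Fin m → ℝ)
    (C : Set (Fin n → ℝ)) (hC : C = {θ | ∀ i, A i ⬝ᵥ θ ≤ b i})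
    (θhat : (Fin n → ℝ) → (Fin n → ℝ))
    (hproj : ∀ y, θhat y ∈ C ∧ ∀ θ ∈ C, ∑ j, (y j - θhat y j) ^ 2 ≤ ∑ j, (y j - θ j) ^ 2) :
    ∀ y w, (∀ i, A i ⬝ᵥ θhat y = b i → A i ⬝ᵥ w ≤ 0) → (y - θhat y) ⬝ᵥ w ≤ 0 := by
  intro y w hw
  set p := θhat y with hp
  have hlin : ∀ i, ∀ t : ℝ, A i ⬝ᵥ (p + t • w) = A i ⬝ᵥ p + t * (A i ⬝ᵥ w) := by
    intro i t
    rw [dotProduct_add, dotProduct_smul]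
    simp [smul_eq_mul]
  have hev : ∀ i : Fin m, ∀ᶠ t : ℝ in nhdsWithin 0 (Set.Ioi 0),
      A i ⬝ᵥ (p + t • w) ≤ b i := by
    intro i
    have hpc : A i ⬝ᵥ p ≤ b i := by
      have h := (hproj y).1; rw [hC] at h; exact h i
    by_cases hiw : A i ⬝ᵥ w ≤ 0
    · filter_upwards [self_mem_nhdsWithin] with t ht
      have ht0 : (0:ℝ) < t := ht
      rw [hlin]
      nlinarith
    · push_neg at hiw
      have hstrict : A i ⬝ᵥ p < b i := by
        rcases lt_or_eq_of_le hpc with h | h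
        · exact h
        · exact absurd (hw i h) (not_le.mpr hiw)
      have hcont : Continuous (fun t : ℝ => A i ⬝ᵥ p + t * (A i ⬝ᵥ w)) := by fun_prop
      have htend : Filter.Tendsto (fun t : ℝ => A i ⬝ᵥ p + t * (A i ⬝ᵥ w)) (nhds 0)
          (nhds (A i ⬝ᵥ p)) := by
        have := hcont.tendsto 0
        simpa using this
      have hev2 : ∀ᶠ t : ℝ in nhds 0, A i ⬝ᵥ p + t * (A i ⬝ᵥ w) < b i :=
        htend.eventually_lt_const hstrict
      apply (hev2.filter_mono nhdsWithin_le_nhds).mono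
      intro t ht'
      rw [hlin]
      linarith
  have hall : ∀ᶠ t : ℝ in nhdsWithin 0 (Set.Ioi 0), (p + t • w) ∈ C := by
    have := Filter.eventually_all.mpr hev
    apply this.mono
    intro t ht
    rw [hC]
    exact ht
  obtain ⟨t, hmemC, ht0⟩ := (hall.and self_mem_nhdsWithin).exists
  have hvi := vi' A b C hC θhat hproj y (p + t • w) hmemC
  have : p + t • w - θhat y = t • w := by rw [← hp]; abel
  rw [this, dotProduct_smul] at hvi
  have ht0' : (0:ℝ) < t := ht0
  rw [smul_eq_mul] at hvi
  by_contra hcon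
  push_neg at hcon
  nlinarith

/-- The divergence of a map `ℝⁿ → ℝⁿ` at `y`: the trace of its derivative,
`∑ i, ∂fᵢ/∂yᵢ (y)`. -/
noncomputable def divg {n : ℕ} (f : (Fin n → ℝ) → (Fin n → ℝ)) (y : Fin n → ℝ) : ℝ :=
  ∑ i, fderiv ℝ f y (Pi.single i 1) i

/-- For the metric projection `θ̂` onto a nonempty polyhedron
`C = {θ : Aθ ≤ b}`, for almost every `y` the map `θ̂` is differentiable at `y` and its
divergence equals `n - rank(A_{J_y})`, where `J_y` is the set of binding constraints at
`θ̂(y)`. -/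
theorem divergence_projection_polyhedron {m n : ℕ}
    (A : Matrix (Fin m) (Fin n) ℝ) (b : Fin m → ℝ)
    (C : Set (Fin n → ℝ)) (hC : C = {θ | ∀ i, A i ⬝ᵥ θ ≤ b i}) (hCne : C.Nonempty)
    (θhat : (Fin n → ℝ) → (Fin n → ℝ))
    (hproj : ∀ y, θhat y ∈ C ∧ ∀ θ ∈ C, ∑ j, (y j - θhat y j) ^ 2 ≤ ∑ j, (y j - θ j) ^ 2) :
    ∀ᵐ y ∂(volume : Measure (Fin n → ℝ)), DifferentiableAt ℝ θhat y ∧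
      divg θhat y = (n : ℝ) -
        (Matrix.rank (A.submatrix
          (fun i : {i : Fin m // A i ⬝ᵥ θhat y = b i} => (i : Fin m)) id) : ℝ) := by
  classical
  have hCclosed : IsClosed C := by
    rw [hC]
    have hrw : {θ : Fin n → ℝ | ∀ i, A i ⬝ᵥ θ ≤ b i} = ⋂ i, {θ | A i ⬝ᵥ θ ≤ b i} := by
      ext θ; simp
    rw [hrw]
    refine isClosed_iInter fun i => isClosed_le ?_ continuous_const
    show Continuous fun θ : Fin n → ℝ => ∑ j, A i j * θ j
    exact continuous_finset_sum _ fun j _ => continuous_const.mul (continuous_apply j)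
  have hCconv : Convex ℝ C := by
    rw [hC]
    intro x hx y hy a a' ha ha' hab
    simp only [Set.mem_setOf_eq] at hx hy ⊢
    intro i
    have h1 := hx i
    have h2 := hy i
    have hxy : A i ⬝ᵥ (a • x + a' • y) = a * (A i ⬝ᵥ x) + a' * (A i ⬝ᵥ y) := by
      rw [dotProduct_add, dotProduct_smul, dotProduct_smul]; simp [smul_eq_mul]
    calc A i ⬝ᵥ (a • x + a' • y) = a * (A i ⬝ᵥ x) + a' * (A i ⬝ᵥ y) := hxy
      _ ≤ a * b i + a' * b i :=
          add_le_add (mul_le_mul_of_nonneg_left h1 ha) (mul_le_mul_of_nonneg_left h2 ha')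
      _ = b i := by rw [← add_mul, hab, one_mul]
  have hvi := vi' A b C hC θhat hproj
  have htan := tangent' A b C hC θhat hproj
  -- choose the affine projections onto the faces
  have hex : ∀ J : Finset (Fin m), ∃ (c : Fin n → ℝ) (Q : (Fin n → ℝ) →L[ℝ] (Fin n → ℝ)),
      (∃ θ₀ : Fin n → ℝ, ∀ i ∈ J, A i ⬝ᵥ θ₀ = b i) →
      ((∀ i ∈ J, ∀ y, A i ⬝ᵥ (c + Q y) = b i) ∧
       (∀ y w, (∀ i ∈ J, A i ⬝ᵥ w = 0) → (y - (c + Q y)) ⬝ᵥ w = 0) ∧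
       (∑ i, Q (Pi.single i 1) i = (n : ℝ) -
         (finrank ℝ (span ℝ {x : Fin n → ℝ | ∃ i ∈ J, A i = x}) : ℝ))) := by
    intro J
    by_cases h : ∃ θ₀ : Fin n → ℝ, ∀ i ∈ J, A i ⬝ᵥ θ₀ = b i
    · obtain ⟨c, Q, h1, h2, h3⟩ := exists_proj A b J h
      exact ⟨c, Q, fun _ => ⟨h1, h2, h3⟩⟩
    · exact ⟨0, 0, fun h' => absurd h' h⟩
  choose c Q hcQ using hex
  set σ : Finset (Fin m) → Set (Fin n → ℝ) := fun J =>
    {y | (c J + Q J y) ∈ C ∧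
      ∀ w, (∀ i ∈ J, A i ⬝ᵥ w ≤ 0) → (y - (c J + Q J y)) ⬝ᵥ w ≤ 0} with hσ
  have hσconv : ∀ J, Convex ℝ (σ J) := by
    intro J y₁ h₁ y₂ h₂ a a' ha ha' hab
    obtain ⟨h₁C, h₁w⟩ := h₁
    obtain ⟨h₂C, h₂w⟩ := h₂
    have hcc : a • c J + a' • c J = c J := by rw [← add_smul, hab, one_smul]
    have hQadd : Q J (a • y₁ + a' • y₂) = a • Q J y₁ + a' • Q J y₂ := by
      rw [(Q J).map_add, (Q J).map_smul, (Q J).map_smul]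
    have haff : c J + Q J (a • y₁ + a' • y₂)
        = a • (c J + Q J y₁) + a' • (c J + Q J y₂) := by
      rw [hQadd]
      simp only [smul_add]
      conv_lhs => rw [← hcc]
      abel
    constructor
    · show (c J + Q J (a • y₁ + a' • y₂)) ∈ C
      rw [haff]
      exact hCconv h₁C h₂C ha ha' hab
    · intro w hw
      have haff2 : (a • y₁ + a' • y₂) - (c J + Q J (a • y₁ + a' • y₂))
          = a • (y₁ - (c J + Q J y₁)) + a' • (y₂ - (c J + Q J y₂)) := by
        rw [haff]
        simp only [smul_sub]
        abel
      rw [haff2, add_dotProduct, smul_dotProduct, smul_dotProduct, smul_eq_mul, smul_eq_mul]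
      nlinarith [h₁w w hw, h₂w w hw]
  have hσclosed : ∀ J, IsClosed (σ J) := by
    intro J
    have hfc : Continuous fun y => c J + Q J y := continuous_const.add (Q J).continuous
    have hrw : σ J = ((fun y => c J + Q J y) ⁻¹' C) ∩
        ⋂ (w : Fin n → ℝ) (_ : ∀ i ∈ J, A i ⬝ᵥ w ≤ 0),
          {y | (y - (c J + Q J y)) ⬝ᵥ w ≤ 0} := by
      ext y
      simp only [hσ, Set.mem_setOf_eq, Set.mem_inter_iff, Set.mem_preimage, Set.mem_iInter]
    rw [hrw]
    refine (hCclosed.preimage hfc).inter (isClosed_iInter fun w => isClosed_iInter fun hw => ?_)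
    refine isClosed_le ?_ continuous_const
    simp only [dotProduct]
    refine continuous_finset_sum _ fun j _ => ?_
    exact (((continuous_apply j).sub ((continuous_apply j).comp hfc)).mul continuous_const)
  have hθσ : ∀ J, (∃ θ₀ : Fin n → ℝ, ∀ i ∈ J, A i ⬝ᵥ θ₀ = b i) →
      ∀ y' ∈ σ J, θhat y' = c J + Q J y' := by
    intro J hne y' hy'
    obtain ⟨P1, P2, P3⟩ := hcQ J hne
    obtain ⟨hy'C, hy'w⟩ := hy'
    refine (proj_unique' (y := y') hy'C ((hproj y').1) ?_ ?_).symm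
    · intro θ hθ
      refine hy'w (θ - (c J + Q J y')) fun i hi => ?_
      rw [dotProduct_sub, P1 i hi y']
      rw [hC] at hθ
      exact sub_nonpos.mpr (hθ i)
    · intro θ hθ
      exact hvi y' θ hθ
  -- the null "bad" set
  have hnull : volume (⋃ J : Finset (Fin m), frontier (σ J)) = 0 :=
    measure_iUnion_null fun J => (hσconv J).addHaar_frontier volume
  rw [ae_iff]
  refine measure_mono_null ?_ hnull
  intro y hy
  simp only [Set.mem_setOf_eq] at hy
  by_contra hnot
  apply hy
  clear hy
  -- the active set at y
  set Jy : Finset (Fin m) := Finset.univ.filter (fun i => A i ⬝ᵥ θhat y = b i) with hJy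
  have hJmem : ∀ i, i ∈ Jy ↔ A i ⬝ᵥ θhat y = b i := by
    intro i; simp [hJy]
  have hne : ∃ θ₀ : Fin n → ℝ, ∀ i ∈ Jy, A i ⬝ᵥ θ₀ = b i :=
    ⟨θhat y, fun i hi => (hJmem i).1 hi⟩
  obtain ⟨P1, P2, P3⟩ := hcQ Jy hne
  -- θhat y agrees with the affine map at y
  have hfeq : θhat y = c Jy + Q Jy y := by
    set d : Fin n → ℝ := θhat y - (c Jy + Q Jy y) with hd
    have hAd : ∀ i ∈ Jy, A i ⬝ᵥ d = 0 := by
      intro i hi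
      rw [hd, dotProduct_sub, (hJmem i).1 hi, P1 i hi y, sub_self]
    have e1 : (y - (c Jy + Q Jy y)) ⬝ᵥ d = 0 := P2 y d hAd
    have e2 : (y - θhat y) ⬝ᵥ d = 0 := by
      have h1 := htan y d (fun i hact => le_of_eq (hAd i ((hJmem i).2 hact)))
      have h2 := htan y (-d) (fun i hact => by
        rw [dotProduct_neg, hAd i ((hJmem i).2 hact)]; simp)
      rw [dotProduct_neg] at h2
      linarith
    have e3 : d ⬝ᵥ d = 0 := by
      have hsplit : d ⬝ᵥ d = (y - (c Jy + Q Jy y)) ⬝ᵥ d - (y - θhat y) ⬝ᵥ d := by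
        rw [← sub_dotProduct]; congr 1; rw [hd]; abel
      rw [hsplit, e1, e2, sub_zero]
    have hdz : d = 0 := by
      have hzero : ∑ j, d j * d j = 0 := e3
      funext j
      have := (Finset.sum_eq_zero_iff_of_nonneg
        (fun j _ => mul_self_nonneg (d j))).mp hzero j (Finset.mem_univ j)
      exact mul_self_eq_zero.mp this
    rw [hd] at hdz
    exact sub_eq_zero.mp hdz
  have hyσ : y ∈ σ Jy := by
    constructor
    · rw [← hfeq]; exact (hproj y).1
    · intro w hw
      rw [← hfeq]
      exact htan y w fun i hact => hw i ((hJmem i).2 hact)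
  have hint : y ∈ interior (σ Jy) := by
    have hfr : y ∉ frontier (σ Jy) := fun h => hnot (Set.mem_iUnion.mpr ⟨Jy, h⟩)
    rw [(hσclosed Jy).frontier_eq] at hfr
    by_contra hni
    exact hfr ⟨hyσ, hni⟩
  have hev : θhat =ᶠ[nhds y] fun y' => c Jy + Q Jy y' := by
    filter_upwards [mem_interior_iff_mem_nhds.mp hint] with y' hy'
    exact hθσ Jy hne y' hy'
  have hder : HasFDerivAt θhat (Q Jy) y :=
    (((Q Jy).hasFDerivAt (x := y)).const_add (c Jy)).congr_of_eventuallyEq hev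
  refine ⟨hder.differentiableAt, ?_⟩
  have hsets : Set.range (A.submatrix
      (fun i : {i : Fin m // A i ⬝ᵥ θhat y = b i} => (i : Fin m)) id)
      = {x : Fin n → ℝ | ∃ i ∈ Jy, A i = x} := by
    ext x
    simp only [Set.mem_range, Set.mem_setOf_eq]
    constructor
    · rintro ⟨i, rfl⟩
      exact ⟨i.1, (hJmem i.1).2 i.2, rfl⟩
    · rintro ⟨i, hi, rfl⟩
      exact ⟨⟨i, (hJmem i).1 hi⟩, rfl⟩
  have hrank : Matrix.rank (A.submatrix
      (fun i : {i : Fin m // A i ⬝ᵥ θhat y = b i} => (i : Fin m)) id)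
      = finrank ℝ (span ℝ {x : Fin n → ℝ | ∃ i ∈ Jy, A i = x}) := by
    rw [Matrix.rank_eq_finrank_span_row, Matrix.row, hsets]
  simp only [divg]
  rw [hder.fderiv, P3, hrank]
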